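/- Let X, Y ⊆ P(ℕ), m a natural number, and 𝒰 a family of open subsets of P(ℕ)^{m+1} that is an ω-cover of Fin^m × Y. Then there is a family 𝒱 of open subsets of the disjoint union P(ℕ) ⊔ P(ℕ) that is an ω-cover of Fin ⊔ Y, such that the family { V^{m+1} ∩ (P(ℕ)^m × Y) : V ∈ 𝒱 } refines 𝒰 (identifying V ⊆ P(ℕ) ⊔ P(ℕ) with the corresponding pair of open sets and V^{m+1} with the product as in the standard embedding of X^m × Y into (X ⊔ Y)^{m+1}). -/

import Mathlib

open Set

/-- `U` is open in the Cantor space `P(ℕ)`. -/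
def CantorOpen (U : Set (Set ℕ)) : Prop :=
  ∀ s ∈ U, ∃ F : Finset ℕ,
    ∀ s' : Set ℕ, (∀ n ∈ F, (n ∈ s' ↔ n ∈ s)) → s' ∈ U

/-- `U` is open in the product `P(ℕ)^m × P(ℕ)`. -/
def CantorOpenProd (m : ℕ) (U : Set ((Fin m → Set ℕ) × Set ℕ)) : Prop :=
  ∀ p ∈ U, ∃ F : Finset ℕ,
    ∀ q : (Fin m → Set ℕ) × Set ℕ,
      (∀ i, ∀ n ∈ F, (n ∈ q.1 i ↔ n ∈ p.1 i)) →
      (∀ n ∈ F, (n ∈ q.2 ↔ n ∈ p.2)) → q ∈ U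

/-- `V` is open in the disjoint union `P(ℕ) ⊔ P(ℕ)`. -/
def OpenSum (V : Set (Set ℕ ⊕ Set ℕ)) : Prop :=
  CantorOpen {s | Sum.inl s ∈ V} ∧ CantorOpen {s | Sum.inr s ∈ V}

theorem stmt13 (Y : Set (Set ℕ)) (m : ℕ)
    (𝒰 : Set (Set ((Fin m → Set ℕ) × Set ℕ)))
    (hopen : ∀ U ∈ 𝒰, CantorOpenProd m U ∧ U ≠ univ)
    (hω : ∀ F : Set ((Fin m → Set ℕ) × Set ℕ), F.Finite →
      (∀ p ∈ F, (∀ i, (p.1 i).Finite) ∧ p.2 ∈ Y) → ∃ U ∈ 𝒰, F ⊆ U) :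
    ∃ 𝒱 : Set (Set (Set ℕ ⊕ Set ℕ)),
      (∀ V ∈ 𝒱, OpenSum V ∧ V ≠ univ) ∧
      (∀ F : Set (Set ℕ ⊕ Set ℕ), F.Finite →
        (∀ z ∈ F, (∃ s : Set ℕ, z = Sum.inl s ∧ s.Finite) ∨
          (∃ s : Set ℕ, z = Sum.inr s ∧ s ∈ Y)) →
        ∃ V ∈ 𝒱, F ⊆ V) ∧
      ∀ V ∈ 𝒱, ∃ U ∈ 𝒰,
        {p : (Fin m → Set ℕ) × Set ℕ |
          (∀ i, Sum.inl (p.1 i) ∈ V) ∧ Sum.inr p.2 ∈ V ∧ p.2 ∈ Y} ⊆ U := by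
  classical
  obtain ⟨U₀, hU₀, -⟩ := hω ∅ finite_empty (by simp)
  refine ⟨{V | (OpenSum V ∧ V ≠ univ) ∧ ∃ U ∈ 𝒰,
      {p : (Fin m → Set ℕ) × Set ℕ |
        (∀ i, Sum.inl (p.1 i) ∈ V) ∧ Sum.inr p.2 ∈ V ∧ p.2 ∈ Y} ⊆ U},
    fun V hV => hV.1, ?_, fun V hV => hV.2⟩
  intro F hF hFgood
  by_cases hT : ∃ y, Sum.inr y ∈ F
  · -- main case
    set S : Set (Set ℕ) := insert ∅ {s | Sum.inl s ∈ F} with hSdef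
    set T : Set (Set ℕ) := {y | Sum.inr y ∈ F} with hTdef
    have hSfin : S.Finite := by
      refine (Set.Finite.insert _ ?_)
      exact hF.preimage (Sum.inl_injective.injOn)
    have hTfin : T.Finite := hF.preimage (Sum.inr_injective.injOn)
    have hTY : T ⊆ Y := by
      intro y hy
      rcases hFgood _ hy with ⟨s, hs, -⟩ | ⟨s, hs, hsY⟩
      · exact absurd hs (by simp)
      · rwa [Sum.inr_injective (hs : Sum.inr y = Sum.inr s)]
    have hSel : ∀ s ∈ S, s.Finite := by
      intro s hs
      rcases hs with rfl | hs
      · exact finite_empty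
      · rcases hFgood _ hs with ⟨s', hs', hfin⟩ | ⟨s', hs', -⟩
        · rwa [Sum.inl_injective (hs' : Sum.inl s = Sum.inl s')]
        · exact absurd hs' (by simp)
    set G : Set ((Fin m → Set ℕ) × Set ℕ) := {p | (∀ i, p.1 i ∈ S) ∧ p.2 ∈ T} with hGdef
    have hGfin : G.Finite := by
      have : G ⊆ (Set.pi univ fun _ : Fin m => S) ×ˢ T := by
        intro p hp
        exact ⟨fun i _ => hp.1 i, hp.2⟩
      exact Set.Finite.subset ((Set.Finite.pi fun _ => hSfin).prod hTfin) this
    obtain ⟨U, hU𝒰, hGU⟩ := hω G hGfin (fun p hp => ⟨fun i => hSel _ (hp.1 i), hTY hp.2⟩)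
    have hUo := (hopen U hU𝒰).1
    choose! Fw hFw using hUo
    set Sf := hSfin.toFinset with hSfdef
    set W : Finset ℕ :=
      hGfin.toFinset.biUnion (fun p => Fw p) ∪ Finset.range (Sf.card + 1) with hWdef
    set A : Set (Set ℕ) := {s | ∃ t ∈ S, ∀ n ∈ W, (n ∈ s ↔ n ∈ t)} with hAdef
    set B : Set (Set ℕ) := {y | ∃ t ∈ T, ∀ n ∈ W, (n ∈ y ↔ n ∈ t)} with hBdef
    set V : Set (Set ℕ ⊕ Set ℕ) := {z | Sum.elim (· ∈ A) (· ∈ B) z} with hVdef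
    have hVl : ∀ s : Set ℕ, Sum.inl s ∈ V ↔ s ∈ A := fun s => Iff.rfl
    have hVr : ∀ s : Set ℕ, Sum.inr s ∈ V ↔ s ∈ B := fun s => Iff.rfl
    -- a point not in V
    have hcard : Sf.card < 2 ^ W.card := by
      have h1 : Sf.card + 1 ≤ W.card := by
        calc Sf.card + 1 = (Finset.range (Sf.card + 1)).card := by simp
        _ ≤ W.card := Finset.card_le_card Finset.subset_union_right
      calc Sf.card < Sf.card + 1 := Nat.lt_succ_self _
      _ ≤ W.card := h1
      _ < 2 ^ W.card := Nat.lt_two_pow_self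
    obtain ⟨E, hEW, hEnot⟩ :
        ∃ E ∈ W.powerset, E ∉ Sf.image (fun t => W.filter (· ∈ t)) := by
      have : (Sf.image (fun t => W.filter (· ∈ t))).card < W.powerset.card := by
        calc (Sf.image (fun t => W.filter (· ∈ t))).card ≤ Sf.card :=
          Finset.card_image_le
        _ < 2 ^ W.card := hcard
        _ = W.powerset.card := (Finset.card_powerset W).symm
      by_contra h
      push_neg at h
      exact absurd (Finset.card_le_card fun E hE => h E hE) (not_le.2 this)
    have hEA : (↑E : Set ℕ) ∉ A := by
      rintro ⟨t, htS, hag⟩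
      apply hEnot
      refine Finset.mem_image.2 ⟨t, (Set.Finite.mem_toFinset _).2 htS, ?_⟩
      ext n
      simp only [Finset.mem_filter]
      constructor
      · rintro ⟨hnW, hnt⟩
        have := (hag n hnW).2 hnt
        simpa using this
      · intro hnE
        have hnW : n ∈ W := Finset.mem_powerset.1 hEW hnE
        exact ⟨hnW, (hag n hnW).1 (by simpa using hnE)⟩
    refine ⟨V, ⟨⟨⟨?_, ?_⟩, ?_⟩, U, hU𝒰, ?_⟩, ?_⟩
    · -- left component open
      rintro s ⟨t, ht, hag⟩
      exact ⟨W, fun s' hs' => ⟨t, ht, fun n hn => (hs' n hn).trans (hag n hn)⟩⟩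
    · -- right component open
      rintro s ⟨t, ht, hag⟩
      exact ⟨W, fun s' hs' => ⟨t, ht, fun n hn => (hs' n hn).trans (hag n hn)⟩⟩
    · -- V ≠ univ
      intro hVu
      exact hEA ((hVl _).1 (hVu.symm ▸ mem_univ _))
    · -- refinement
      rintro p ⟨h1, h2, -⟩
      have h1' : ∀ i, ∃ t ∈ S, ∀ n ∈ W, (n ∈ p.1 i ↔ n ∈ t) := fun i => (hVl _).1 (h1 i)
      choose t ht hag using h1'
      obtain ⟨u, hu, hagu⟩ := (hVr _).1 h2
      have hq₀G : (t, u) ∈ G := ⟨ht, hu⟩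
      have hq₀U : (t, u) ∈ U := hGU hq₀G
      have hsub : Fw (t, u) ⊆ W := by
        refine subset_trans ?_ Finset.subset_union_left
        exact Finset.subset_biUnion_of_mem _ ((Set.Finite.mem_toFinset _).2 hq₀G)
      exact hFw (t, u) hq₀U p (fun i n hn => hag i n (hsub hn))
        (fun n hn => hagu n (hsub hn))
    · -- F ⊆ V
      intro z hz
      rcases hFgood z hz with ⟨s, rfl, -⟩ | ⟨s, rfl, -⟩
      · exact (hVl s).2 ⟨s, Or.inr hz, fun n _ => Iff.rfl⟩
      · exact (hVr s).2 ⟨s, hz, fun n _ => Iff.rfl⟩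
  · -- no inr points: use the left half
    set V : Set (Set ℕ ⊕ Set ℕ) := {z | ∃ s : Set ℕ, z = Sum.inl s} with hVdef
    refine ⟨V, ⟨⟨⟨?_, ?_⟩, ?_⟩, U₀, hU₀, ?_⟩, ?_⟩
    · exact fun s _ => ⟨∅, fun s' _ => ⟨s', rfl⟩⟩
    · rintro s ⟨s', hs'⟩
      exact absurd hs' (by simp)
    · intro hVu
      have : Sum.inr (∅ : Set ℕ) ∈ V := hVu.symm ▸ mem_univ _
      rcases this with ⟨s', hs'⟩
      exact absurd hs' (by simp)
    · rintro p ⟨-, h2, -⟩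
      rcases h2 with ⟨s', hs'⟩
      exact absurd hs' (by simp)
    · intro z hz
      rcases hFgood z hz with ⟨s, rfl, -⟩ | ⟨s, rfl, -⟩
      · exact ⟨s, rfl⟩
      · exact absurd ⟨s, hz⟩ hT
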